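/- There is no 2×2 unitary matrix of the form e^{iδ} R_z(ζ - 2k_x) R_y(θ_x) R_z(φ_x) R_z(ζ_y - 2k_y) R_y(θ_y) R_z(φ_y) that equals the identity for all (k_x, k_y) ∈ [-π, π]², for any fixed real parameters δ, ζ, θ_x, φ_x, ζ_y, θ_y, φ_y. Equivalently, the walk operator W(k_x, k_y) = e^{ik_xσ_z} C_x e^{ik_yσ_z} C_y cannot be identically equal to the identity as a function of (k_x, k_y). -/

import Mathlib

open Matrix

noncomputable section

def σy : Matrix (Fin 2) (Fin 2) ℂ := !![0, -Complex.I; Complex.I, 0]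
def σz : Matrix (Fin 2) (Fin 2) ℂ := !![1, 0; 0, -1]
def Rz (α : ℝ) : Matrix (Fin 2) (Fin 2) ℂ := NormedSpace.exp ((-(Complex.I * (α : ℂ) / 2)) • σz)
def Ry (β : ℝ) : Matrix (Fin 2) (Fin 2) ℂ := NormedSpace.exp ((-(Complex.I * (β : ℂ) / 2)) • σy)

lemma σz_diag : σz = Matrix.diagonal ![1, -1] := by
  ext i j; fin_cases i <;> fin_cases j <;> simp [σz, Matrix.diagonal]

lemma exp_pi_σz : NormedSpace.exp ((Complex.I * (Real.pi : ℂ)) • σz) = (-1 : Matrix (Fin 2) (Fin 2) ℂ) := by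
  rw [σz_diag, ← Matrix.diagonal_smul, Matrix.exp_diagonal]
  have hexp : NormedSpace.exp = Complex.exp := Complex.exp_eq_exp_ℂ.symm
  ext i j
  fin_cases i <;> fin_cases j <;>
      simp [Pi.smul_def, hexp, Matrix.diagonal] <;>
    rw [mul_comm Complex.I] <;> [skip; rw [Complex.exp_neg]] <;>
    rw [Complex.exp_pi_mul_I] <;> norm_num

lemma exp_zero_σz : NormedSpace.exp ((Complex.I * ((0:ℝ) : ℂ)) • σz) = 1 := by
  simp [NormedSpace.exp_zero]

theorem stmt_8 (Cx Cy : Matrix (Fin 2) (Fin 2) ℂ)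
    (hCx : Cx ∈ Matrix.unitaryGroup (Fin 2) ℂ) (hCy : Cy ∈ Matrix.unitaryGroup (Fin 2) ℂ) :
    ¬ (∀ kx ∈ Set.Icc (-Real.pi) Real.pi, ∀ ky ∈ Set.Icc (-Real.pi) Real.pi,
        NormedSpace.exp ((Complex.I * (kx : ℂ)) • σz) * Cx *
          (NormedSpace.exp ((Complex.I * (ky : ℂ)) • σz) * Cy) = 1) := by
  intro h
  have hpi := Real.pi_pos.le
  have h0 : (0:ℝ) ∈ Set.Icc (-Real.pi) Real.pi := ⟨by linarith, hpi⟩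
  have hp : Real.pi ∈ Set.Icc (-Real.pi) Real.pi := ⟨by linarith, le_refl _⟩
  have h1 := h 0 h0 0 h0
  have h2 := h Real.pi hp 0 h0
  rw [exp_zero_σz] at h1 h2
  rw [one_mul] at h1 h2
  rw [exp_pi_σz] at h2
  rw [one_mul] at h1
  rw [neg_one_mul, neg_mul, h1] at h2
  have := Matrix.ext_iff.mpr h2 0 0
  simp [Matrix.one_apply] at this
  norm_num at this
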